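/- Let f be a continuous function on a cube I = [α_1, β_1] × ⋯ × [α_n, β_n] in ℝⁿ that is monotone increasing in each variable and concave. Then for any two abelian n-tuples (x_1, …, x_n) and (y_1, …, y_n) of self-adjoint elements in a unital C*-algebra A with α_i·1 ≤ x_i ≤ y_i ≤ β_i·1 for all i, and any positive linear functional φ on A containing y_1, …, y_n in its centralizer, one has φ( f(x) ) ≤ φ( f(y) ). -/

import Mathlib

open scoped ComplexOrder

/-- The cube `I = [α 1, β 1] × ⋯ × [α n, β n]` in `ℝⁿ`. -/
def cube {n : ℕ} (I : Fin n → Set ℝ) : Set (Fin n → ℝ) := {l | ∀ i, l i ∈ I i}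

/-- The `i`-th coordinate function on the cube, as a complex-valued continuous map. -/
noncomputable def coordFn {n : ℕ} (I : Fin n → Set ℝ) (i : Fin n) : C(cube I, ℂ) :=
  ⟨fun l => ((l : Fin n → ℝ) i : ℂ),
    Complex.continuous_ofReal.comp ((continuous_apply i).comp continuous_subtype_val)⟩

/-- A real function which is continuous on the cube, as a complex-valued continuous map. -/
noncomputable def cubeFn {n : ℕ} {I : Fin n → Set ℝ} {f : (Fin n → ℝ) → ℝ}
    (hf : ContinuousOn f (cube I)) : C(cube I, ℂ) :=
  ⟨fun l => (f l : ℂ),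
    Complex.continuous_ofReal.comp (continuousOn_iff_continuous_restrict.mp hf)⟩

lemma approx_supergradient {n : ℕ} {K : Set (Fin n → ℝ)} (hKcl : IsClosed K)
    {f : (Fin n → ℝ) → ℝ} (hf : ContinuousOn f K)
    (hconc : ConcaveOn ℝ K f) {μ : Fin n → ℝ} (hμ : μ ∈ K) {ε : ℝ} (hε : 0 < ε) :
    ∃ c : Fin n → ℝ, ∀ l ∈ K, f l ≤ f μ + ε + ∑ i, c i * (l i - μ i) := by
  obtain ⟨F, hF⟩ := ContinuousMap.exists_restrict_eq (Y := ℝ) hKcl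
      ⟨K.restrict f, continuousOn_iff_continuous_restrict.mp hf⟩
  have hFeq : ∀ p (hp : p ∈ K), F p = f p := fun p hp => ContinuousMap.congr_fun hF ⟨p, hp⟩
  set Hyp : Set ((Fin n → ℝ) × ℝ) := {p | p.1 ∈ K ∧ p.2 ≤ f p.1} with hHyp
  have hHypeq : Hyp = {p | p.1 ∈ K} ∩ {p | p.2 ≤ F p.1} := by
    ext p
    constructor
    · rintro ⟨h1, h2⟩
      refine ⟨h1, ?_⟩
      show p.2 ≤ F p.1
      rwa [hFeq p.1 h1]
    · rintro ⟨h1, h2⟩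
      refine ⟨h1, ?_⟩
      have h2' : p.2 ≤ F p.1 := h2
      rwa [hFeq p.1 h1] at h2'
  have hclosed : IsClosed Hyp := by
    rw [hHypeq]
    exact (hKcl.preimage continuous_fst).inter
      (isClosed_le continuous_snd (F.continuous.comp continuous_fst))
  have hconv : Convex ℝ Hyp := hconc.convex_hypograph
  have hnot : ((μ, f μ + ε) : (Fin n → ℝ) × ℝ) ∉ Hyp := by
    rintro ⟨-, h2⟩
    simp only at h2
    linarith
  obtain ⟨L, u, hLu, huL⟩ := geometric_hahn_banach_closed_point hconv hclosed hnot
  set b := L (0, 1) with hbdef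
  have key : ∀ p : (Fin n → ℝ) × ℝ, L p = L (p.1, 0) + p.2 * b := by
    intro p
    have hp : p = ((p.1, (0:ℝ)) + p.2 • ((0 : Fin n → ℝ), (1:ℝ))) := by
      simp [Prod.ext_iff]
    conv_lhs => rw [hp]
    rw [map_add, map_smul, smul_eq_mul]
  have h1 : L (μ, f μ) < u := hLu _ ⟨hμ, le_rfl⟩
  have h2 : u < L (μ, f μ + ε) := huL
  have hb : 0 < b := by
    have k1 := key (μ, f μ + ε)
    have k2 := key (μ, f μ)
    simp only at k1 k2
    nlinarith
  refine ⟨fun i => -(L ((fun j => if i = j then 1 else 0), 0)) / b, fun l hl => ?_⟩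
  have h3 : L (l, f l) < u := hLu _ ⟨hl, le_rfl⟩
  set ℓ : (Fin n → ℝ) →ₗ[ℝ] ℝ := L.toLinearMap.comp (LinearMap.inl ℝ (Fin n → ℝ) ℝ) with hℓ
  have expand : ∀ v : Fin n → ℝ, L (v, 0) = ∑ i, v i * L ((fun j => if i = j then 1 else 0), 0) := by
    intro v
    have h := LinearMap.pi_apply_eq_sum_univ ℓ v
    simpa [hℓ, smul_eq_mul, LinearMap.comp_apply, LinearMap.inl_apply] using h
  have hsum : ∑ i, (-(L ((fun j => if i = j then 1 else 0), 0)) / b) * (l i - μ i)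
      = (L (μ, 0) - L (l, 0)) / b := by
    rw [expand l, expand μ, ← Finset.sum_sub_distrib, Finset.sum_div]
    apply Finset.sum_congr rfl
    intro i _
    ring
  rw [hsum]
  have k1 := key (l, f l)
  have k2 := key (μ, f μ + ε)
  simp only at k1 k2
  have hdm : (L (μ, 0) - L (l, 0)) / b * b = L (μ, 0) - L (l, 0) :=
    div_mul_cancel₀ _ (ne_of_gt hb)
  nlinarith [h3.trans h2]

noncomputable def hatFn (s c t : ℝ) : ℝ := max 0 (1 - |t - c| / s)

lemma hatFn_nonneg (s c t : ℝ) : 0 ≤ hatFn s c t := le_max_left _ _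

lemma hatFn_continuous (s c : ℝ) : Continuous (hatFn s c) := by
  apply continuous_const.max
  exact continuous_const.sub (((continuous_id.sub continuous_const).abs).div_const s)

lemma hatFn_support {s c t : ℝ} (hs : 0 < s) (h : hatFn s c t ≠ 0) : |t - c| < s := by
  by_contra h'
  push_neg at h'
  apply h
  unfold hatFn
  rw [max_eq_left]
  have : (1:ℝ) ≤ |t - c| / s := (one_le_div hs).mpr h'
  linarith

lemma tri_eq (v : ℝ) :
    max 0 (1 - |v|) = max (v + 1) 0 - 2 * max v 0 + max (v - 1) 0 := by
  rcases abs_cases v with ⟨h1, h2⟩ | ⟨h1, h2⟩ <;> rw [h1] <;>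
    simp only [max_def] <;> split_ifs <;> linarith

lemma tri_sum {N : ℕ} {u : ℝ} (h0 : 0 ≤ u) (hN : u ≤ N) :
    ∑ j : Fin (N + 1), max 0 (1 - |u - j|) = 1 := by
  set d : ℕ → ℝ := fun j => max (u - j + 1) 0 - max (u - j) 0 with hd
  have step : ∀ j : ℕ, max 0 (1 - |u - j|) = d j - d (j + 1) := by
    intro j
    have e1 : u - ((j + 1 : ℕ) : ℝ) + 1 = u - j := by push_cast; ring
    have e2 : u - ((j + 1 : ℕ) : ℝ) = u - j - 1 := by push_cast; ring
    simp only [hd, e1, e2]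
    rw [tri_eq (u - j)]
    ring
  have h3 : ∑ j : Fin (N + 1), max 0 (1 - |u - j|)
      = ∑ j ∈ Finset.range (N + 1), (fun m : ℕ => max 0 (1 - |u - (m : ℝ)|)) j :=
    Fin.sum_univ_eq_sum_range (fun m : ℕ => max 0 (1 - |u - (m : ℝ)|)) (N + 1)
  rw [h3]
  simp only []
  rw [Finset.sum_congr rfl fun j _ => step j, Finset.sum_range_sub' d]
  have hd0 : d 0 = 1 := by
    simp only [hd]
    push_cast
    rw [max_eq_left (by linarith), max_eq_left (by linarith)]
    ring
  have hdN : d (N + 1) = 0 := by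
    simp only [hd]
    push_cast
    rw [max_eq_right (by linarith), max_eq_right (by linarith)]
    ring
  rw [hd0, hdN]
  ring

lemma hat_sum {s : ℝ} (hs : 0 < s) (a : ℝ) (N : ℕ) (t : ℝ) (h1 : a ≤ t) (h2 : t ≤ a + N * s) :
    ∑ j : Fin (N + 1), hatFn s (a + j * s) t = 1 := by
  have key : ∀ j : Fin (N + 1), hatFn s (a + j * s) t = max 0 (1 - |(t - a) / s - j|) := by
    intro j
    unfold hatFn
    congr 2
    rw [div_sub' (ne_of_gt hs), abs_div, abs_of_pos hs]
    congr 2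
    ring
  simp_rw [key]
  exact tri_sum (div_nonneg (by linarith) hs.le) (by rw [div_le_iff₀ hs]; linarith)
open scoped ComplexOrder

section PhiFacts

variable {A : Type*} [CStarAlgebra A] [PartialOrder A] [StarOrderedRing A]
variable (φ : A →ₗ[ℂ] ℂ) (hφ : ∀ b : A, 0 ≤ φ (star b * b))

include hφ

lemma phi_nonneg {a : A} (ha : 0 ≤ a) : 0 ≤ φ a := by
  have h1 : a = star (CFC.sqrt a) * CFC.sqrt a := by
    rw [(IsSelfAdjoint.of_nonneg (CFC.sqrt_nonneg (a := a))).star_eq,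
      CFC.sqrt_mul_sqrt_self a ha]
  rw [h1]
  exact hφ _

lemma phi_mono {a b : A} (hab : a ≤ b) : φ a ≤ φ b := by
  have h := phi_nonneg φ hφ (sub_nonneg.mpr hab)
  rw [map_sub] at h
  exact sub_nonneg.mp h

lemma phi_one_im : (φ 1).im = 0 := by
  have h := hφ 1
  rw [star_one, one_mul] at h
  exact ((Complex.le_def.mp h).2).symm

lemma phi_one_re : 0 ≤ (φ 1).re := by
  have h := hφ 1
  rw [star_one, one_mul] at h
  exact (Complex.le_def.mp h).1

omit hφ in
lemma phi_algebraMap (r : ℝ) : φ (algebraMap ℝ A r) = (r : ℂ) * φ 1 := by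
  rw [IsScalarTower.algebraMap_apply ℝ ℂ A r, Algebra.algebraMap_eq_smul_one, map_smul,
    smul_eq_mul]
  rfl

lemma phi_im {a : A} (ha : IsSelfAdjoint a) : (φ a).im = 0 := by
  have h1 : a ≤ algebraMap ℝ A ‖a‖ := ha.le_algebraMap_norm_self
  have h2 := phi_mono φ hφ h1
  have h3 := (Complex.le_def.mp h2).2
  rw [phi_algebraMap] at h3
  have h4 : ((‖a‖ : ℂ) * φ 1).im = 0 := by
    simp [Complex.mul_im, phi_one_im φ hφ]
  rw [h4] at h3
  exact h3

omit hφ in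
lemma star_decomp (a : A) : ∃ h k : A, IsSelfAdjoint h ∧ IsSelfAdjoint k ∧
    a = h + Complex.I • k ∧ star a = h - Complex.I • k ∧ ‖h‖ ≤ ‖a‖ ∧ ‖k‖ ≤ ‖a‖ := by
  have hn2 : ‖((2:ℂ)⁻¹)‖ = (2:ℝ)⁻¹ := by
    rw [norm_inv]
    norm_num
  have hstar2 : star ((2:ℂ)⁻¹) = (2:ℂ)⁻¹ := by
    rw [star_inv₀]
    norm_num
  have key : Complex.I • ((2:ℂ)⁻¹ • (Complex.I • (star a - a))) = (2:ℂ)⁻¹ • (a - star a) := by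
    rw [smul_smul, smul_smul]
    rw [show Complex.I * (2:ℂ)⁻¹ * Complex.I = -(2:ℂ)⁻¹ by
      rw [mul_comm Complex.I ((2:ℂ)⁻¹), mul_assoc, Complex.I_mul_I]; ring]
    rw [neg_smul, ← smul_neg, neg_sub]
  refine ⟨(2:ℂ)⁻¹ • (a + star a), (2:ℂ)⁻¹ • (Complex.I • (star a - a)), ?_, ?_, ?_, ?_, ?_, ?_⟩
  · rw [IsSelfAdjoint, star_smul, star_add, star_star, add_comm, hstar2]
  · rw [IsSelfAdjoint, star_smul, star_smul, star_sub, star_star, hstar2,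
      show (star Complex.I : ℂ) = -Complex.I from Complex.conj_I]
    rw [neg_smul, ← smul_neg, neg_sub]
  · rw [key]; module
  · rw [key]; module
  · have h1 : ‖a + star a‖ ≤ ‖a‖ + ‖star a‖ := norm_add_le _ _
    rw [norm_star] at h1
    rw [norm_smul, hn2]
    linarith [norm_nonneg a]
  · have h1 : ‖star a - a‖ ≤ ‖star a‖ + ‖a‖ := norm_sub_le _ _
    rw [norm_star] at h1
    rw [norm_smul, norm_smul, Complex.norm_I, one_mul, hn2]
    linarith [norm_nonneg a]

lemma phi_star (a : A) : φ (star a) = (starRingEnd ℂ) (φ a) := by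
  obtain ⟨h, k, hsa, ksa, hdec, hdecs, -, -⟩ := star_decomp a
  have e1 : φ (star a) = φ h - Complex.I * φ k := by
    rw [hdecs, map_sub, map_smul, smul_eq_mul]
  have e2 : φ a = φ h + Complex.I * φ k := by
    rw [hdec, map_add, map_smul, smul_eq_mul]
  have him := phi_im φ hφ hsa
  have kim := phi_im φ hφ ksa
  rw [e1, e2]
  simp [Complex.ext_iff, Complex.mul_re, Complex.mul_im, him, kim]

lemma phi_sa_bound {h : A} (hsa : IsSelfAdjoint h) : ‖φ h‖ ≤ (φ 1).re * ‖h‖ := by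
  have him := phi_im φ hφ hsa
  have hub := (Complex.le_def.mp (phi_mono φ hφ hsa.le_algebraMap_norm_self)).1
  have hlb := (Complex.le_def.mp (phi_mono φ hφ hsa.neg_algebraMap_norm_le_self)).1
  rw [phi_algebraMap] at hub
  rw [map_neg, phi_algebraMap] at hlb
  have h1 : ((‖h‖ : ℂ) * φ 1).re = ‖h‖ * (φ 1).re := by
    simp [Complex.mul_re, phi_one_im φ hφ]
  rw [h1] at hub
  rw [show (-((‖h‖ : ℂ) * φ 1)).re = -(‖h‖ * (φ 1).re) by
    simp [Complex.mul_re, phi_one_im φ hφ]] at hlb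
  have hfh : φ h = ((φ h).re : ℂ) := Complex.ext rfl (by simp [him])
  rw [hfh, Complex.norm_real, mul_comm]
  exact abs_le.mpr ⟨by linarith, hub⟩

lemma phi_cont : Continuous φ := by
  apply AddMonoidHomClass.continuous_of_bound φ (2 * (φ 1).re)
  intro a
  obtain ⟨h, k, hsa, ksa, hdec, -, hn, kn⟩ := star_decomp a
  have e2 : φ a = φ h + Complex.I * φ k := by
    rw [hdec, map_add, map_smul, smul_eq_mul]
  calc ‖φ a‖ ≤ ‖φ h‖ + ‖Complex.I * φ k‖ := e2 ▸ norm_add_le _ _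
  _ = ‖φ h‖ + ‖φ k‖ := by rw [norm_mul, Complex.norm_I, one_mul]
  _ ≤ (φ 1).re * ‖h‖ + (φ 1).re * ‖k‖ :=
      add_le_add (phi_sa_bound φ hφ hsa) (phi_sa_bound φ hφ ksa)
  _ ≤ 2 * (φ 1).re * ‖a‖ := by
      have := phi_one_re φ hφ
      nlinarith

end PhiFacts
section Iota

variable {X : Type*} [TopologicalSpace X]

noncomputable def iotaC (g : C(X, ℝ)) : C(X, ℂ) :=
  ⟨fun p => (g p : ℂ), Complex.continuous_ofReal.comp g.continuous⟩

@[simp] lemma iotaC_apply (g : C(X, ℝ)) (p : X) : iotaC g p = (g p : ℂ) := rfl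

lemma iotaC_mul (g h : C(X, ℝ)) : iotaC (g * h) = iotaC g * iotaC h := by
  ext p; simp

lemma iotaC_sub (g h : C(X, ℝ)) : iotaC (g - h) = iotaC g - iotaC h := by
  ext p; simp

lemma iotaC_smul (r : ℝ) (g : C(X, ℝ)) : iotaC (r • g) = (r : ℂ) • iotaC g := by
  ext p; simp

lemma iotaC_one : iotaC (1 : C(X, ℝ)) = 1 := by
  ext p; simp

lemma iotaC_star (g : C(X, ℝ)) : star (iotaC g) = iotaC g := by
  ext p; simp [Complex.conj_ofReal]

lemma iotaC_sum {ι : Type*} (s : Finset ι) (g : ι → C(X, ℝ)) :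
    iotaC (∑ i ∈ s, g i) = ∑ i ∈ s, iotaC (g i) := by
  ext p
  simp

section Pos

variable {A : Type*} [CStarAlgebra A] [PartialOrder A] [StarOrderedRing A]

lemma pi_iota_sa (π : C(X, ℂ) →⋆ₐ[ℂ] A) (g : C(X, ℝ)) : IsSelfAdjoint (π (iotaC g)) := by
  rw [IsSelfAdjoint, ← map_star, iotaC_star]

lemma pi_iota_nonneg (π : C(X, ℂ) →⋆ₐ[ℂ] A) {g : C(X, ℝ)} (hg : ∀ p, 0 ≤ g p) :
    0 ≤ π (iotaC g) := by
  have h1 : iotaC g = star (iotaC ⟨fun p => Real.sqrt (g p),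
      Real.continuous_sqrt.comp g.continuous⟩) * iotaC ⟨fun p => Real.sqrt (g p),
      Real.continuous_sqrt.comp g.continuous⟩ := by
    rw [iotaC_star, ← iotaC_mul]
    congr 1
    ext p
    exact (Real.mul_self_sqrt (hg p)).symm
  rw [h1, map_mul, map_star]
  exact star_mul_self_nonneg _

lemma pi_iota_mono (π : C(X, ℂ) →⋆ₐ[ℂ] A) {g h : C(X, ℝ)} (hgh : ∀ p, g p ≤ h p) :
    π (iotaC g) ≤ π (iotaC h) := by
  rw [← sub_nonneg, ← map_sub, ← iotaC_sub]
  exact pi_iota_nonneg π fun p => by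
    simp only [ContinuousMap.sub_apply, sub_nonneg]
    exact hgh p

end Pos

end Iota

section Centralizer

variable {A : Type*} [CStarAlgebra A] [PartialOrder A] [StarOrderedRing A]
variable {X : Type*} [TopologicalSpace X] [CompactSpace X] [T2Space X]

lemma centralizer_closure (π : C(X, ℂ) →⋆ₐ[ℂ] A) (φ : A →ₗ[ℂ] ℂ)
    (hφ : ∀ b : A, 0 ≤ φ (star b * b)) (T : Set C(X, ℂ))
    (hsep : ∀ p q : X, p ≠ q → ∃ t ∈ T, t p ≠ t q)
    (hT : ∀ t ∈ T, ∀ a : A, φ (π t * a) = φ (a * π t)) :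
    ∀ g : C(X, ℂ), ∀ a : A, φ (π g * a) = φ (a * π g) := by
  set S : Set A := {b : A | ∀ a, φ (b * a) = φ (a * b)} with hS
  have hScl : IsClosed S := by
    have hc := phi_cont φ hφ
    rw [show S = ⋂ a : A, {b : A | φ (b * a) = φ (a * b)} by
      ext b; simp [hS, Set.mem_iInter]]
    exact isClosed_iInter fun a =>
      isClosed_eq (hc.comp (continuous_id.mul continuous_const))
        (hc.comp (continuous_const.mul continuous_id))
  have hπcont : Continuous π := by
    apply AddMonoidHomClass.continuous_of_bound π 1
    intro g
    rw [one_mul]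
    exact NonUnitalStarAlgHom.norm_apply_le π g
  have hTS : ∀ g ∈ StarAlgebra.adjoin ℂ T, π g ∈ S := by
    intro g hg
    induction hg using StarAlgebra.adjoin_induction with
    | mem t ht => exact fun a => hT t ht a
    | algebraMap r =>
        intro a
        rw [AlgHomClass.commutes, Algebra.commutes]
    | add u v hu hv ihu ihv =>
        intro a
        rw [map_add, add_mul, mul_add, map_add, map_add, ihu a, ihv a]
    | mul u v hu hv ihu ihv =>
        intro a
        rw [map_mul π]
        calc φ (π u * π v * a) = φ (π u * (π v * a)) := by rw [mul_assoc]
        _ = φ ((π v * a) * π u) := ihu _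
        _ = φ (π v * (a * π u)) := by rw [mul_assoc]
        _ = φ ((a * π u) * π v) := ihv _
        _ = φ (a * (π u * π v)) := by rw [mul_assoc]
    | star u hu ihu =>
        intro a
        calc φ (π (star u) * a) = φ (star (star a * π u)) := by
              rw [map_star, star_mul, star_star]
        _ = (starRingEnd ℂ) (φ (star a * π u)) := phi_star φ hφ _
        _ = (starRingEnd ℂ) (φ (π u * star a)) := by rw [← ihu (star a)]
        _ = φ (star (π u * star a)) := (phi_star φ hφ _).symm
        _ = φ (a * π (star u)) := by rw [star_mul, star_star, map_star]
  intro g a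
  have hsepA : (StarAlgebra.adjoin ℂ T).SeparatesPoints := by
    intro p q hpq
    obtain ⟨t, htT, hne⟩ := hsep p q hpq
    exact ⟨_, ⟨t, StarAlgebra.subset_adjoin ℂ T htT, rfl⟩, hne⟩
  have htop : g ∈ (StarAlgebra.adjoin ℂ T).topologicalClosure := by
    rw [ContinuousMap.starSubalgebra_topologicalClosure_eq_top_of_separatesPoints _ hsepA]
    exact StarSubalgebra.mem_top
  have hcl : g ∈ closure ((StarAlgebra.adjoin ℂ T : Set C(X, ℂ))) := by
    rw [← StarSubalgebra.topologicalClosure_coe]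
    exact htop
  have hmem : π g ∈ closure (π '' ((StarAlgebra.adjoin ℂ T : Set C(X, ℂ)))) :=
    image_closure_subset_closure_image hπcont ⟨g, hcl, rfl⟩
  have hsub : π '' ((StarAlgebra.adjoin ℂ T : Set C(X, ℂ))) ⊆ S := by
    rintro _ ⟨g', hg', rfl⟩
    exact hTS g' hg'
  exact (closure_minimal hsub hScl) hmem a

end Centralizer

lemma cube_eq_pi {n : ℕ} (I : Fin n → Set ℝ) : cube I = Set.pi Set.univ I := by
  ext l; simp [cube, Set.mem_pi]

lemma cube_supergradient {n : ℕ} (α β : Fin n → ℝ)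
    {f : (Fin n → ℝ) → ℝ}
    (hf_cont : ContinuousOn f (cube fun i => Set.Icc (α i) (β i)))
    (hf_mono : ∀ u v : Fin n → ℝ, u ∈ cube (fun i => Set.Icc (α i) (β i)) →
      v ∈ cube (fun i => Set.Icc (α i) (β i)) → (∀ i, u i ≤ v i) → f u ≤ f v)
    (hf_conc : ConcaveOn ℝ (cube fun i => Set.Icc (α i) (β i)) f)
    {μ : Fin n → ℝ} (hμ : μ ∈ cube fun i => Set.Icc (α i) (β i))
    {ε : ℝ} (hε : 0 < ε) :
    ∃ c : Fin n → ℝ, (∀ i, 0 ≤ c i) ∧ ∀ l ∈ cube (fun i => Set.Icc (α i) (β i)),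
      f l ≤ f μ + ε + ∑ i, c i * (l i - μ i) := by
  have hKcl : IsClosed (cube fun i => Set.Icc (α i) (β i)) := by
    rw [cube_eq_pi]
    exact isClosed_set_pi fun i _ => isClosed_Icc
  obtain ⟨c, hc⟩ := approx_supergradient hKcl hf_cont hf_conc hμ hε
  refine ⟨fun i => max (c i) 0, fun i => le_max_right _ _, ?_⟩
  intro l hl
  set l' : Fin n → ℝ := fun i => if 0 ≤ c i then l i else max (l i) (μ i) with hl'
  have hl'K : l' ∈ cube fun i => Set.Icc (α i) (β i) := by
    intro i
    simp only [hl']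
    split_ifs
    · exact hl i
    · exact ⟨le_max_of_le_left (hl i).1, max_le (hl i).2 (hμ i).2⟩
  have h1 : f l ≤ f l' := by
    apply hf_mono l l' hl hl'K
    intro i
    simp only [hl']
    split_ifs
    · exact le_rfl
    · exact le_max_left _ _
  have h2 := hc l' hl'K
  have h3 : ∑ i, c i * (l' i - μ i) ≤ ∑ i, max (c i) 0 * (l i - μ i) := by
    apply Finset.sum_le_sum
    intro i _
    simp only [hl']
    split_ifs with h
    · rw [max_eq_left h]
    · have hc0 : c i < 0 := lt_of_not_ge h
      rw [max_eq_right hc0.le, zero_mul]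
      have hge : 0 ≤ max (l i) (μ i) - μ i := by
        simp [le_max_right]
      exact mul_nonpos_of_nonpos_of_nonneg hc0.le hge
  linarith

set_option maxHeartbeats 2000000 in
/-- **Monotonicity under a trace-like functional, concave case** (Theorem 16, second half).
Let `f` be continuous, monotone increasing in each variable and concave on the cube
`[α 1, β 1] × ⋯ × [α n, β n]`.  For abelian `n`-tuples `x`, `y` of self-adjoint elements
of a unital C*-algebra `A` with `α i • 1 ≤ x i ≤ y i ≤ β i • 1`, and any positive linear
functional `φ` containing `y 1, …, y n` in its centralizer, `φ (f x) ≤ φ (f y)`.  The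
functional calculus is encoded by star-algebra homomorphisms `πx`, `πy` sending the
coordinate functions to the `x i` resp. `y i`. -/
theorem monotone_trace_functional_concave
    {A : Type*} [CStarAlgebra A] [PartialOrder A] [StarOrderedRing A]
    {n : ℕ} (α β : Fin n → ℝ) (hαβ : ∀ i, α i ≤ β i)
    (f : (Fin n → ℝ) → ℝ)
    (hf_cont : ContinuousOn f (cube fun i => Set.Icc (α i) (β i)))
    (hf_mono : ∀ u v : Fin n → ℝ, u ∈ cube (fun i => Set.Icc (α i) (β i)) →
      v ∈ cube (fun i => Set.Icc (α i) (β i)) → (∀ i, u i ≤ v i) → f u ≤ f v)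
    (hf_conc : ConcaveOn ℝ (cube fun i => Set.Icc (α i) (β i)) f)
    (x y : Fin n → A)
    (hx_sa : ∀ i, IsSelfAdjoint (x i)) (hy_sa : ∀ i, IsSelfAdjoint (y i))
    (hx_comm : ∀ i j, x i * x j = x j * x i) (hy_comm : ∀ i j, y i * y j = y j * y i)
    (hα : ∀ i, algebraMap ℝ A (α i) ≤ x i) (hxy : ∀ i, x i ≤ y i)
    (hβ : ∀ i, y i ≤ algebraMap ℝ A (β i))
    (πx πy : C(cube fun i => Set.Icc (α i) (β i), ℂ) →⋆ₐ[ℂ] A)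
    (hπx : ∀ i, πx (coordFn _ i) = x i) (hπy : ∀ i, πy (coordFn _ i) = y i)
    (φ : A →ₗ[ℂ] ℂ) (hφ_pos : ∀ b : A, 0 ≤ φ (star b * b))
    (hφ_cent : ∀ i, ∀ b : A, φ (b * y i) = φ (y i * b)) :
    φ (πx (cubeFn hf_cont)) ≤ φ (πy (cubeFn hf_cont)) := by
  classical
  have hKcomp : IsCompact (cube fun i => Set.Icc (α i) (β i)) := by
    rw [cube_eq_pi]
    exact isCompact_univ_pi fun i => isCompact_Icc
  haveI : CompactSpace (cube fun i => Set.Icc (α i) (β i)) :=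
    isCompact_iff_compactSpace.mp hKcomp
  -- the real restriction of `f`
  set fR : C(cube fun i => Set.Icc (α i) (β i), ℝ) :=
    ⟨fun p => f p, continuousOn_iff_continuous_restrict.mp hf_cont⟩ with hfR
  have hFeq : cubeFn hf_cont = iotaC fR := rfl
  -- real coordinate functions
  set coordR : Fin n → C(cube fun i => Set.Icc (α i) (β i), ℝ) :=
    fun i => ⟨fun p => (p : Fin n → ℝ) i,
      (continuous_apply i).comp continuous_subtype_val⟩ with hcoordR
  have hcoordC : ∀ i, iotaC (coordR i) = coordFn (fun i => Set.Icc (α i) (β i)) i :=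
    fun i => rfl
  -- everything in the range of `πy` commutes with everything under `φ`
  have hcent : ∀ g : C(cube fun i => Set.Icc (α i) (β i), ℂ), ∀ a : A,
      φ (πy g * a) = φ (a * πy g) := by
    apply centralizer_closure πy φ hφ_pos (Set.range (coordFn fun i => Set.Icc (α i) (β i)))
    · intro p q hpq
      have hex : ∃ i, (p : Fin n → ℝ) i ≠ (q : Fin n → ℝ) i := by
        by_contra hco
        push_neg at hco
        exact hpq (Subtype.ext (funext hco))
      obtain ⟨i, hi⟩ := hex
      refine ⟨coordFn _ i, ⟨i, rfl⟩, ?_⟩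
      simpa [coordFn, Complex.ofReal_inj] using hi
    · rintro t ⟨i, rfl⟩ a
      rw [hπy i]
      exact (hφ_cent i a).symm
  rw [hFeq]
  have hsax : IsSelfAdjoint (πx (iotaC fR)) := pi_iota_sa πx fR
  have hsay : IsSelfAdjoint (πy (iotaC fR)) := pi_iota_sa πy fR
  rw [Complex.le_def]
  refine ⟨?_, by rw [phi_im φ hφ_pos hsax, phi_im φ hφ_pos hsay]⟩
  apply le_of_forall_pos_le_add
  intro ε hε
  have hφ1re : 0 ≤ (φ 1).re := phi_one_re φ hφ_pos
  set ε₀ : ℝ := ε / (2 * ((φ 1).re + 1)) with hε₀def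
  have hε₀ : 0 < ε₀ := by
    apply div_pos hε
    nlinarith
  -- uniform continuity
  have hUC := hKcomp.uniformContinuousOn_of_continuous hf_cont
  rw [Metric.uniformContinuousOn_iff] at hUC
  obtain ⟨δ, hδpos, hδ⟩ := hUC ε₀ hε₀
  -- choice of the grid size
  have hsum_pos : ∀ i, 0 < β i - α i + 1 := fun i => by have := hαβ i; linarith
  obtain ⟨N, hN⟩ := exists_nat_gt (2 * (∑ i, (β i - α i + 1)) / δ)
  have hCnn : 0 ≤ ∑ i, (β i - α i + 1) := Finset.sum_nonneg fun i _ => (hsum_pos i).le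
  have hNpos : 0 < (N : ℝ) := lt_of_le_of_lt (by positivity) hN
  have hN0 : (N : ℝ) ≠ 0 := ne_of_gt hNpos
  set sstep : Fin n → ℝ := fun i => (β i - α i + 1) / N with hsstep
  have hstep : ∀ i, 0 < sstep i := fun i => div_pos (hsum_pos i) hNpos
  have hsmall : ∀ i, 2 * sstep i < δ := by
    intro i
    have h1 : 2 * (∑ i, (β i - α i + 1)) < N * δ := by
      rw [div_lt_iff₀ hδpos] at hN
      linarith
    have h2 : β i - α i + 1 ≤ ∑ j, (β j - α j + 1) :=
      Finset.single_le_sum (fun j _ => (hsum_pos j).le) (Finset.mem_univ i)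
    simp only [hsstep]
    rw [← mul_div_assoc, div_lt_iff₀ hNpos]
    nlinarith
  -- the partition of unity
  set G : (Fin n → Fin (N + 1)) → C(cube fun i => Set.Icc (α i) (β i), ℝ) :=
    fun k => ⟨fun p => ∏ i, hatFn (sstep i) (α i + (k i : ℕ) * sstep i) ((p : Fin n → ℝ) i),
      continuous_finset_prod _ fun i _ => (hatFn_continuous _ _).comp
        ((continuous_apply i).comp continuous_subtype_val)⟩ with hG
  have hG_nonneg : ∀ k p, 0 ≤ G k p := by
    intro k p
    simp only [hG, ContinuousMap.coe_mk]
    exact Finset.prod_nonneg fun i _ => hatFn_nonneg _ _ _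
  have hNs : ∀ i, β i ≤ α i + N * sstep i := by
    intro i
    simp only [hsstep]
    rw [mul_comm, div_mul_cancel₀ _ hN0]
    linarith
  have hG_sum : ∑ k : Fin n → Fin (N + 1), G k = 1 := by
    ext p
    have h1 : (∑ k : Fin n → Fin (N + 1), G k) p
        = ∑ k : Fin n → Fin (N + 1), ∏ i, hatFn (sstep i) (α i + (k i : ℕ) * sstep i)
          ((p : Fin n → ℝ) i) := by
      simp [hG]
    have h2 := Finset.prod_univ_sum (fun _ : Fin n => (Finset.univ : Finset (Fin (N + 1))))
      (fun i j => hatFn (sstep i) (α i + (j : ℕ) * sstep i) ((p : Fin n → ℝ) i))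
    rw [Fintype.piFinset_univ] at h2
    rw [h1, show (1 : C(cube fun i => Set.Icc (α i) (β i), ℝ)) p = 1 from rfl, ← h2]
    apply Finset.prod_eq_one
    intro i _
    exact hat_sum (hstep i) (α i) N _ (p.2 i).1 (le_trans (p.2 i).2 (hNs i))
  -- the corner points
  set μp : (Fin n → Fin (N + 1)) → (Fin n → ℝ) :=
    fun k i => min (α i + ((k i : ℕ) + 1) * sstep i) (β i) with hμp
  have hμK : ∀ k, μp k ∈ cube fun i => Set.Icc (α i) (β i) := by
    intro k i
    constructor
    · apply le_min
      · have : (0:ℝ) ≤ ((k i : ℕ) + 1) * sstep i :=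
          mul_nonneg (by positivity) (hstep i).le
        linarith
      · exact hαβ i
    · exact min_le_right _ _
  have hsupp : ∀ k (p : cube fun i => Set.Icc (α i) (β i)), G k p ≠ 0 → ∀ i,
      (p : Fin n → ℝ) i ≤ μp k i ∧ μp k i - (p : Fin n → ℝ) i ≤ 2 * sstep i := by
    intro k p hne i
    have hfac : hatFn (sstep i) (α i + (k i : ℕ) * sstep i) ((p : Fin n → ℝ) i) ≠ 0 := by
      intro h0
      apply hne
      simp only [hG, ContinuousMap.coe_mk]
      exact Finset.prod_eq_zero (Finset.mem_univ i) h0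
    have habs := hatFn_support (hstep i) hfac
    rw [abs_lt] at habs
    constructor
    · apply le_min
      · nlinarith [habs.2]
      · exact (p.2 i).2
    · have h1 : μp k i ≤ α i + ((k i : ℕ) + 1) * sstep i := min_le_left _ _
      nlinarith [habs.1]
  have hclose : ∀ k (p : cube fun i => Set.Icc (α i) (β i)), G k p ≠ 0 →
      |f p - f (μp k)| < ε₀ := by
    intro k p hne
    have hdist : dist (p : Fin n → ℝ) (μp k) < δ := by
      rw [dist_pi_lt_iff hδpos]
      intro i
      rw [Real.dist_eq, abs_lt]
      obtain ⟨h1, h2⟩ := hsupp k p hne i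
      constructor
      · have := hsmall i
        linarith
      · have := hstep i
        linarith
    have := hδ (p : Fin n → ℝ) p.2 (μp k) (hμK k) hdist
    rwa [Real.dist_eq] at this
  -- algebra elements
  set sqrtG : (Fin n → Fin (N + 1)) → C(cube fun i => Set.Icc (α i) (β i), ℝ) :=
    fun k => ⟨fun p => Real.sqrt (G k p), Real.continuous_sqrt.comp (G k).continuous⟩
    with hsqrtG
  have hsq_mul : ∀ k, sqrtG k * sqrtG k = G k := by
    intro k
    ext p
    exact Real.mul_self_sqrt (hG_nonneg k p)
  have hrr : ∀ k, πy (iotaC (sqrtG k)) * πy (iotaC (sqrtG k)) = πy (iotaC (G k)) := by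
    intro k
    rw [← map_mul, ← iotaC_mul, hsq_mul]
  have hrsa : ∀ k, IsSelfAdjoint (πy (iotaC (sqrtG k))) := fun k => pi_iota_sa πy _
  have hPsum : ∑ k : Fin n → Fin (N + 1), πy (iotaC (G k)) = 1 := by
    rw [← map_sum, ← iotaC_sum, hG_sum, iotaC_one, map_one]
  have hφP : ∀ k, 0 ≤ φ (πy (iotaC (G k))) := by
    intro k
    have h := hφ_pos (πy (iotaC (sqrtG k)))
    rwa [(hrsa k).star_eq, hrr k] at h
  -- expressing `φ (P k * a)` as a conjugation
  have hconj : ∀ k (a : A),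
      φ (πy (iotaC (G k)) * a) = φ (πy (iotaC (sqrtG k)) * a * πy (iotaC (sqrtG k))) := by
    intro k a
    rw [← hrr k, mul_assoc, hcent (iotaC (sqrtG k)) (πy (iotaC (sqrtG k)) * a)]
  have hψmono : ∀ k {a b : A}, a ≤ b →
      (φ (πy (iotaC (sqrtG k)) * a * πy (iotaC (sqrtG k)))).re ≤
      (φ (πy (iotaC (sqrtG k)) * b * πy (iotaC (sqrtG k)))).re := by
    intro k a b hab
    have h1 : 0 ≤ star (πy (iotaC (sqrtG k))) * (b - a) * πy (iotaC (sqrtG k)) :=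
      star_left_conjugate_nonneg (sub_nonneg.mpr hab) _
    rw [(hrsa k).star_eq] at h1
    have h2 := phi_nonneg φ hφ_pos h1
    rw [mul_sub, sub_mul, map_sub] at h2
    have := (Complex.le_def.mp h2).1
    simp only [Complex.zero_re, Complex.sub_re] at this
    linarith
  -- the x-side bound for each k
  have hboundx : ∀ k : Fin n → Fin (N + 1),
      (φ (πy (iotaC (G k)) * πx (iotaC fR))).re
        ≤ (f (μp k) + ε₀) * (φ (πy (iotaC (G k)))).re := by
    intro k
    obtain ⟨c, hc0, hcineq⟩ := cube_supergradient α β hf_cont hf_mono hf_conc (hμK k) hε₀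
    set q : C(cube fun i => Set.Icc (α i) (β i), ℝ) :=
      ⟨fun p => f (μp k) + ε₀ + ∑ i, c i * ((p : Fin n → ℝ) i - μp k i),
        continuous_const.add (continuous_finset_sum _ fun i _ =>
          continuous_const.mul (((continuous_apply i).comp continuous_subtype_val).sub
            continuous_const))⟩ with hq
    have hopx : πx (iotaC fR) ≤ πx (iotaC q) := by
      apply pi_iota_mono
      intro p
      simp only [hfR, hq, ContinuousMap.coe_mk]
      exact hcineq _ p.2
    have hqC : iotaC q = ((f (μp k) + ε₀ : ℝ) : ℂ) • 1
        + ∑ i, ((c i : ℝ) : ℂ) • (coordFn (fun i => Set.Icc (α i) (β i)) i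
            - ((μp k i : ℝ) : ℂ) • 1) := by
      ext p
      simp only [iotaC_apply, hq, ContinuousMap.coe_mk, ContinuousMap.add_apply,
        ContinuousMap.smul_apply, ContinuousMap.one_apply, ContinuousMap.sum_apply,
        ContinuousMap.sub_apply, coordFn, smul_eq_mul]
      push_cast
      simp only [mul_one]
    have hπxq : πx (iotaC q) = ((f (μp k) + ε₀ : ℝ) : ℂ) • 1
        + ∑ i, ((c i : ℝ) : ℂ) • (x i - ((μp k i : ℝ) : ℂ) • 1) := by
      rw [hqC, map_add, map_smul, map_one, map_sum]
      congr 1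
      refine Finset.sum_congr rfl fun i _ => ?_
      rw [map_smul, map_sub, hπx i, map_smul, map_one]
    have hxi : ∀ i, (φ (πy (iotaC (sqrtG k)) * x i * πy (iotaC (sqrtG k)))).re
        ≤ μp k i * (φ (πy (iotaC (G k)))).re := by
      intro i
      have h3 : πy (iotaC (G k)) * y i = πy (iotaC (G k * coordR i)) := by
        rw [iotaC_mul, map_mul, hcoordC i, hπy i]
      have h4 : ∀ p, (G k * coordR i) p ≤ (μp k i • G k) p := by
        intro p
        simp only [ContinuousMap.mul_apply, ContinuousMap.smul_apply, smul_eq_mul,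
          hcoordR, ContinuousMap.coe_mk]
        rcases eq_or_ne (G k p) 0 with h0 | h0
        · rw [h0, mul_zero, zero_mul]
        · have hle := (hsupp k p h0 i).1
          nlinarith [mul_nonneg (hG_nonneg k p) (sub_nonneg.mpr hle)]
      calc (φ (πy (iotaC (sqrtG k)) * x i * πy (iotaC (sqrtG k)))).re
          ≤ (φ (πy (iotaC (sqrtG k)) * y i * πy (iotaC (sqrtG k)))).re := hψmono k (hxy i)
      _ = (φ (πy (iotaC (G k)) * y i)).re := by rw [← hconj k (y i)]
      _ = (φ (πy (iotaC (G k * coordR i)))).re := by rw [h3]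
      _ ≤ (((μp k i : ℝ) : ℂ) * φ (πy (iotaC (G k)))).re := by
          have h5 := phi_mono φ hφ_pos (pi_iota_mono πy h4)
          rw [iotaC_smul, map_smul, map_smul, smul_eq_mul] at h5
          exact (Complex.le_def.mp h5).1
      _ = μp k i * (φ (πy (iotaC (G k)))).re := Complex.re_ofReal_mul _ _
    rw [hconj k]
    calc (φ (πy (iotaC (sqrtG k)) * πx (iotaC fR) * πy (iotaC (sqrtG k)))).re
        ≤ (φ (πy (iotaC (sqrtG k)) * πx (iotaC q) * πy (iotaC (sqrtG k)))).re :=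
          hψmono k hopx
    _ = (f (μp k) + ε₀) * (φ (πy (iotaC (G k)))).re
        + ∑ i, c i * ((φ (πy (iotaC (sqrtG k)) * x i * πy (iotaC (sqrtG k)))).re
            - μp k i * (φ (πy (iotaC (G k)))).re) := by
        have hexp : πy (iotaC (sqrtG k)) * (((f (μp k) + ε₀ : ℝ) : ℂ) • 1
            + ∑ i, ((c i : ℝ) : ℂ) • (x i - ((μp k i : ℝ) : ℂ) • 1)) * πy (iotaC (sqrtG k))
            = ((f (μp k) + ε₀ : ℝ) : ℂ) • πy (iotaC (G k))
              + ∑ i, ((c i : ℝ) : ℂ) •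
                  (πy (iotaC (sqrtG k)) * x i * πy (iotaC (sqrtG k))
                    - ((μp k i : ℝ) : ℂ) • πy (iotaC (G k))) := by
          rw [mul_add, add_mul, Finset.mul_sum, Finset.sum_mul]
          congr 1
          · rw [mul_smul_comm, smul_mul_assoc, mul_one, hrr k]
          · refine Finset.sum_congr rfl fun i _ => ?_
            rw [mul_smul_comm, smul_mul_assoc, mul_sub, sub_mul, mul_smul_comm,
              smul_mul_assoc, mul_one, hrr k]
        rw [hπxq, hexp, map_add, map_smul, map_sum]
        simp only [map_smul, map_sub, smul_eq_mul]
        rw [Complex.add_re, Complex.re_sum]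
        simp only [Complex.re_ofReal_mul, Complex.sub_re]
    _ ≤ (f (μp k) + ε₀) * (φ (πy (iotaC (G k)))).re := by
        have hsum0 : ∑ i, c i * ((φ (πy (iotaC (sqrtG k)) * x i * πy (iotaC (sqrtG k)))).re
            - μp k i * (φ (πy (iotaC (G k)))).re) ≤ 0 := by
          apply Finset.sum_nonpos
          intro i _
          exact mul_nonpos_of_nonneg_of_nonpos (hc0 i) (by linarith [hxi i])
        linarith
  -- the y-side bound for each k
  have hboundy : ∀ k : Fin n → Fin (N + 1),
      (f (μp k) - ε₀) * (φ (πy (iotaC (G k)))).re ≤ (φ (πy (iotaC (G k * fR)))).re := by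
    intro k
    have h4 : ∀ p, ((f (μp k) - ε₀) • G k) p ≤ (G k * fR) p := by
      intro p
      simp only [ContinuousMap.mul_apply, ContinuousMap.smul_apply, smul_eq_mul,
        hfR, ContinuousMap.coe_mk]
      change _ ≤ G k p * f (p : Fin n → ℝ)
      rcases eq_or_ne (G k p) 0 with h0 | h0
      · rw [h0, mul_zero, zero_mul]
      · have habs := hclose k p h0
        rw [abs_lt] at habs
        nlinarith [mul_nonneg (hG_nonneg k p)
          (by linarith [habs.1] : (0:ℝ) ≤ f (p : Fin n → ℝ) - (f (μp k) - ε₀))]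
    have h5 := phi_mono φ hφ_pos (pi_iota_mono πy h4)
    rw [iotaC_smul, map_smul, map_smul, smul_eq_mul] at h5
    have h6 := (Complex.le_def.mp h5).1
    rwa [Complex.re_ofReal_mul] at h6
  -- splitting the two sides
  have hsplitx : φ (πx (iotaC fR)) = ∑ k : Fin n → Fin (N + 1),
      φ (πy (iotaC (G k)) * πx (iotaC fR)) := by
    calc φ (πx (iotaC fR))
        = φ ((∑ k : Fin n → Fin (N + 1), πy (iotaC (G k))) * πx (iotaC fR)) := by
          rw [hPsum, one_mul]
    _ = ∑ k : Fin n → Fin (N + 1), φ (πy (iotaC (G k)) * πx (iotaC fR)) := by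
          rw [Finset.sum_mul, map_sum]
  have hsplity : φ (πy (iotaC fR)) = ∑ k : Fin n → Fin (N + 1),
      φ (πy (iotaC (G k * fR))) := by
    calc φ (πy (iotaC fR))
        = φ (πy (iotaC ((∑ k : Fin n → Fin (N + 1), G k) * fR))) := by
          rw [hG_sum, one_mul]
    _ = ∑ k : Fin n → Fin (N + 1), φ (πy (iotaC (G k * fR))) := by
          rw [Finset.sum_mul, iotaC_sum, map_sum, map_sum]
  -- put everything together
  have hPre : ∀ k, 0 ≤ (φ (πy (iotaC (G k)))).re := fun k => (Complex.le_def.mp (hφP k)).1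
  have hfinal : 2 * ε₀ * (φ 1).re ≤ ε := by
    have hD : (0:ℝ) < 2 * ((φ 1).re + 1) := by nlinarith
    have hεD : ε₀ * (2 * ((φ 1).re + 1)) = ε := div_mul_cancel₀ _ (ne_of_gt hD)
    nlinarith
  calc (φ (πx (iotaC fR))).re
      = ∑ k : Fin n → Fin (N + 1), (φ (πy (iotaC (G k)) * πx (iotaC fR))).re := by
        rw [hsplitx, Complex.re_sum]
  _ ≤ ∑ k : Fin n → Fin (N + 1), (f (μp k) + ε₀) * (φ (πy (iotaC (G k)))).re :=
        Finset.sum_le_sum fun k _ => hboundx k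
  _ = ∑ k : Fin n → Fin (N + 1), ((f (μp k) - ε₀) * (φ (πy (iotaC (G k)))).re
        + 2 * ε₀ * (φ (πy (iotaC (G k)))).re) := by
        refine Finset.sum_congr rfl fun k _ => ?_
        ring
  _ = ∑ k : Fin n → Fin (N + 1), (f (μp k) - ε₀) * (φ (πy (iotaC (G k)))).re
        + 2 * ε₀ * ∑ k : Fin n → Fin (N + 1), (φ (πy (iotaC (G k)))).re := by
        rw [Finset.sum_add_distrib, Finset.mul_sum]
  _ ≤ ∑ k : Fin n → Fin (N + 1), (φ (πy (iotaC (G k * fR)))).re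
        + 2 * ε₀ * ∑ k : Fin n → Fin (N + 1), (φ (πy (iotaC (G k)))).re := by
        exact add_le_add_left (Finset.sum_le_sum fun k _ => hboundy k) _
  _ = (φ (πy (iotaC fR))).re + 2 * ε₀ * (φ 1).re := by
        rw [← Complex.re_sum, ← hsplity, ← Complex.re_sum, ← map_sum, hPsum]
  _ ≤ (φ (πy (iotaC fR))).re + ε := by linarith
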